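/- Let f : ℝ → ℝ be nondecreasing, continuous, with f(x) = 0 for all x ≤ 0. Let T > 0, let c be a real-valued function defined on a neighborhood of θ ∈ ℝ, differentiable at θ, with c(θ) > 0 and c(θ) ≠ T. Then H(θ') = ∫₀^T f((c(θ') − t)⁺) dt is differentiable at θ with H'(θ) = c'(θ)·[ f(c(θ)) − f((c(θ) − T)⁺) ]. -/

import Mathlib

open Set

/-- deterministic per-cycle core of Corollary 1. For `f`
nondecreasing, continuous and vanishing on `(-∞,0]`, `T > 0`, `c`
differentiable at `θ` with `c(θ) > 0` and `c(θ) ≠ T`, the cycle cost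
`H(θ') = ∫₀^T f((c(θ') − t)⁺) dt` is differentiable at `θ` with
`H'(θ) = c'(θ)·[f(c(θ)) − f((c(θ) − T)⁺)]`. -/
theorem stmt_6 (f : ℝ → ℝ) (hf_mono : Monotone f) (hf_cont : Continuous f)
    (hf0 : ∀ x ≤ 0, f x = 0)
    (T : ℝ) (hT : 0 < T) (θ L : ℝ) (c : ℝ → ℝ)
    (hc : HasDerivAt c L θ) (hcpos : 0 < c θ) (hcT : c θ ≠ T) :
    HasDerivAt (fun θ' => ∫ t in (0 : ℝ)..T, f (max (c θ' - t) 0))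
      (L * (f (c θ) - f (max (c θ - T) 0))) θ := by
  set g : ℝ → ℝ := fun s => f (max s 0) with hg
  have hgc : Continuous g := hf_cont.comp (continuous_id.max continuous_const)
  have hint : ∀ a b : ℝ, IntervalIntegrable g MeasureTheory.volume a b :=
    fun a b => hgc.intervalIntegrable a b
  have key : ∀ y : ℝ, (∫ t in (0:ℝ)..T, g (y - t)) =
      (∫ s in (0:ℝ)..y, g s) - ∫ s in (0:ℝ)..(y - T), g s := by
    intro y
    rw [intervalIntegral.integral_comp_sub_left g y]
    simp only [sub_zero]
    rw [intervalIntegral.integral_interval_sub_left (hint 0 y) (hint 0 (y - T))]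
  have hG : ∀ y : ℝ, HasDerivAt (fun x => ∫ s in (0:ℝ)..x, g s) (g y) y := by
    intro y
    exact intervalIntegral.integral_hasDerivAt_right (hint 0 y)
      (hgc.stronglyMeasurableAtFilter _ _) hgc.continuousAt
  have hΦ : HasDerivAt (fun θ' => (∫ s in (0:ℝ)..(c θ'), g s)
      - ∫ s in (0:ℝ)..(c θ' - T), g s)
      ((g (c θ) - g (c θ - T)) * L) θ := by
    have h1 : HasDerivAt (fun θ' => ∫ s in (0:ℝ)..(c θ'), g s) (g (c θ) * L) θ :=
      (hG (c θ)).comp θ hc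
    have h2 : HasDerivAt (fun θ' => ∫ s in (0:ℝ)..(c θ' - T), g s)
        (g (c θ - T) * L) θ := by
      have := (hG (c θ - T)).comp θ (hc.sub_const T)
      exact this
    have h12 := h1.sub h2
    rw [← sub_mul] at h12
    exact h12
  have heq : (fun θ' => ∫ t in (0 : ℝ)..T, f (max (c θ' - t) 0)) =
      (fun θ' => (∫ s in (0:ℝ)..(c θ'), g s) - ∫ s in (0:ℝ)..(c θ' - T), g s) := by
    funext θ'
    exact key (c θ')
  rw [heq]
  have hmax : max (c θ) 0 = c θ := max_eq_left hcpos.le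
  convert hΦ using 1
  simp [hg, hmax]
  ring
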